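/- arXiv:0804.1605 — 4 statements merged into one kernel-verified Lean document; each statement's English description precedes it below -/
import Mathlib

section
/- Let P : [−1,1] → ℝ and define Ψ*(h) = ∫₀^β P*(h(t)) dt for h ∈ L²(S_β), where P*(c) = sup_{x∈[−1,1]}(cx − P(x)) is the Legendre transform of P. Suppose Λ : L²(S_β) → ℝ is rotation-invariant and satisfies Λ(h) ≤ (1/β)∫₀^β Λ(h(t)·1)dt. Then sup_{h∈L²(S_β)} { Λ(h) − Ψ*(h) } = sup_{c∈ℝ} { Λ(c·1) − β·P*(c) }. -/
open MeasureTheory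

/-- One-dimensional Legendre transform P*(c) = sup_{x ∈ [−1,1]} (cx − P(x)). -/
noncomputable def Pstar (P : ℝ → ℝ) (c : ℝ) : ℝ :=
  ⨆ x : Set.Icc (-1:ℝ) 1, (c * (x : ℝ) - P x)

/-- reduction to constant fields. If Λ on β-periodic L² fields is
rotation invariant and satisfies the chessboard estimate
Λ(h) ≤ (1/β)∫₀^β Λ(h(t)·1)dt, then
sup_h { Λ(h) − ∫₀^β P*(h(t))dt } = sup_c { Λ(c·1) − β·P*(c) }. -/
theorem stmt11 (β : ℝ) (hβ : 0 < β) (P : ℝ → ℝ) (Λ : (ℝ → ℝ) → ℝ)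
    (S : Set (ℝ → ℝ))
    (hS : S = {h : ℝ → ℝ | Function.Periodic h β ∧ Measurable h ∧
      IntervalIntegrable (fun t => (h t) ^ 2) volume 0 β ∧
      IntervalIntegrable (fun t => Λ (fun _ => h t)) volume 0 β ∧
      IntervalIntegrable (fun t => Pstar P (h t)) volume 0 β})
    (hrot : ∀ h ∈ S, ∀ s : ℝ, Λ (fun t => h (s + t)) = Λ h)
    (hchess : ∀ h ∈ S, Λ h ≤ (1 / β) * ∫ t in (0:ℝ)..β, Λ (fun _ => h t))
    (hbddB : BddAbove {x : ℝ | ∃ c : ℝ, x = Λ (fun _ => c) - β * Pstar P c}) :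
    sSup {x : ℝ | ∃ h ∈ S, x = Λ h - ∫ t in (0:ℝ)..β, Pstar P (h t)} =
      sSup {x : ℝ | ∃ c : ℝ, x = Λ (fun _ => c) - β * Pstar P c} := by
  set B : Set ℝ := {x : ℝ | ∃ c : ℝ, x = Λ (fun _ => c) - β * Pstar P c} with hB
  set A : Set ℝ := {x : ℝ | ∃ h ∈ S, x = Λ h - ∫ t in (0:ℝ)..β, Pstar P (h t)} with hA
  -- constants belong to S
  have hconst : ∀ c : ℝ, (fun _ : ℝ => c) ∈ S := by
    intro c
    rw [hS]
    refine ⟨fun t => rfl, measurable_const, intervalIntegrable_const,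
      intervalIntegrable_const, intervalIntegrable_const⟩
  -- B ⊆ A
  have hBA : B ⊆ A := by
    rintro x ⟨c, rfl⟩
    refine ⟨fun _ => c, hconst c, ?_⟩
    rw [intervalIntegral.integral_const]
    simp
  -- every element of A is ≤ sSup B
  have hAle : ∀ x ∈ A, x ≤ sSup B := by
    rintro x ⟨h, hhS, rfl⟩
    have hmem := hhS
    rw [hS] at hmem
    obtain ⟨hper, hmeas, hsq, hΛint, hPint⟩ := hmem
    have h1 : Λ h ≤ (1 / β) * ∫ t in (0:ℝ)..β, Λ (fun _ => h t) := hchess h hhS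
    have key : (∫ t in (0:ℝ)..β, (Λ (fun _ => h t) - β * Pstar P (h t))) ≤
        ∫ _t in (0:ℝ)..β, sSup B := by
      apply intervalIntegral.integral_mono_on (le_of_lt hβ)
      · exact hΛint.sub (hPint.const_mul β)
      · exact intervalIntegrable_const
      · intro t _
        exact le_csSup hbddB ⟨h t, rfl⟩
    rw [intervalIntegral.integral_sub hΛint (hPint.const_mul β),
      intervalIntegral.integral_const_mul, intervalIntegral.integral_const] at key
    have hβ' : (1 / β) * β = 1 := by field_simp
    -- key : ∫Λ - β*∫P ≤ (β-0) • sSup B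
    have key2 : (1 / β) * ((∫ t in (0:ℝ)..β, Λ (fun _ => h t)) -
        β * ∫ t in (0:ℝ)..β, Pstar P (h t)) ≤ (1 / β) * ((β - 0) • sSup B) :=
      mul_le_mul_of_nonneg_left key (by positivity)
    have key3 : (1 / β) * ((β - 0) • sSup B) = sSup B := by
      simp only [smul_eq_mul, sub_zero]
      field_simp
    rw [key3] at key2
    calc Λ h - ∫ t in (0:ℝ)..β, Pstar P (h t)
        ≤ (1 / β) * (∫ t in (0:ℝ)..β, Λ (fun _ => h t)) -
            ∫ t in (0:ℝ)..β, Pstar P (h t) := by linarith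
      _ = (1 / β) * ((∫ t in (0:ℝ)..β, Λ (fun _ => h t)) -
            β * ∫ t in (0:ℝ)..β, Pstar P (h t)) := by
          rw [mul_sub, ← mul_assoc, hβ', one_mul]
      _ ≤ sSup B := key2
  have hBnonempty : B.Nonempty := ⟨Λ (fun _ => 0) - β * Pstar P 0, 0, rfl⟩
  have hAnonempty : A.Nonempty := ⟨_, hBA ⟨0, rfl⟩⟩
  apply le_antisymm
  · exact csSup_le hAnonempty hAle
  · exact csSup_le_csSup ⟨sSup B, fun x hx => hAle x hx⟩ hBnonempty hBA
end

section
/- Let ξ be a Poisson process of intensity λ on the circle S_β, and fix t ∈ (0, β). Let {0 ↔ t} be the event that 0 and t lie in the same connected component of S_β \ ξ. Then E[ 1_{0↔t} · 2^{#(ξ)} ] = e^{λ(β−2t)} + e^{−λ(β−2t)}. -/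
/-- for a Poisson process ξ of intensity λ on S_β and t ∈ (0,β),
E[1_{0↔t}·2^{#(ξ)}] = e^{λ(β−2t)} + e^{−λ(β−2t)}.  The numbers of points on the two
arcs (0,t) and (t,β) are independent Poisson(λt) and Poisson(λ(β−t)); the event {0 ↔ t}
is that one of the two arcs carries no point; #(ξ) = max(total number of points, 1). -/
theorem stmt13 (lam β t : ℝ) (hlam : 0 < lam) (hβ : 0 < β) (ht : 0 < t) (htβ : t < β) :
    ∑' p : ℕ × ℕ,
        (Real.exp (-(lam * t)) * (lam * t) ^ p.1 / p.1.factorial) *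
          (Real.exp (-(lam * (β - t))) * (lam * (β - t)) ^ p.2 / p.2.factorial) *
          (if p.1 = 0 ∨ p.2 = 0 then (2:ℝ) ^ (max (p.1 + p.2) 1) else 0)
      = Real.exp (lam * (β - 2 * t)) + Real.exp (-(lam * (β - 2 * t))) := by
  set b := lam * t with hb
  set a := lam * (β - t) with ha
  have hexp : ∀ x : ℝ, HasSum (fun n : ℕ => x ^ n / n.factorial) (Real.exp x) := by
    intro x
    rw [Real.exp_eq_exp_ℝ]
    exact NormedSpace.expSeries_div_hasSum_exp x
  set g1 : ℕ → ℝ := fun m => Real.exp (-b) * ((2*b) ^ m / m.factorial) +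
      (if m = 0 then Real.exp (-b) else 0) with hg1def
  set h1 : ℕ → ℝ := fun n => if n = 0 then Real.exp (-a) else 0 with hh1def
  set g2 : ℕ → ℝ := fun m => if m = 0 then Real.exp (-b) else 0 with hg2def
  set h2 : ℕ → ℝ := fun n => Real.exp (-a) * ((2*a) ^ n / n.factorial) -
      (if n = 0 then Real.exp (-a) else 0) with hh2def
  have hg1 : HasSum g1 (Real.exp (-b) * Real.exp (2*b) + Real.exp (-b)) :=
    ((hexp (2*b)).mul_left _).add (hasSum_ite_eq 0 _)
  have hh1 : HasSum h1 (Real.exp (-a)) := hasSum_ite_eq 0 _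
  have hg2 : HasSum g2 (Real.exp (-b)) := hasSum_ite_eq 0 _
  have hh2 : HasSum h2 (Real.exp (-a) * Real.exp (2*a) - Real.exp (-a)) :=
    ((hexp (2*a)).mul_left _).sub (hasSum_ite_eq 0 _)
  have s1 : Summable fun p : ℕ × ℕ => g1 p.1 * h1 p.2 :=
    summable_mul_of_summable_norm (summable_norm_iff.2 hg1.summable)
      (summable_norm_iff.2 hh1.summable)
  have s2 : Summable fun p : ℕ × ℕ => g2 p.1 * h2 p.2 :=
    summable_mul_of_summable_norm (summable_norm_iff.2 hg2.summable)
      (summable_norm_iff.2 hh2.summable)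
  have H : HasSum (fun p : ℕ × ℕ => g1 p.1 * h1 p.2 + g2 p.1 * h2 p.2)
      ((Real.exp (-b) * Real.exp (2*b) + Real.exp (-b)) * Real.exp (-a) +
        Real.exp (-b) * (Real.exp (-a) * Real.exp (2*a) - Real.exp (-a))) :=
    (hg1.mul hh1 s1).add (hg2.mul hh2 s2)
  have key : ∀ p : ℕ × ℕ,
      (Real.exp (-b) * b ^ p.1 / p.1.factorial) *
        (Real.exp (-a) * a ^ p.2 / p.2.factorial) *
        (if p.1 = 0 ∨ p.2 = 0 then (2:ℝ) ^ (max (p.1 + p.2) 1) else 0)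
      = g1 p.1 * h1 p.2 + g2 p.1 * h2 p.2 := by
    rintro ⟨m, n⟩
    match m, n with
    | 0, 0 => simp [hg1def, hh1def, hg2def, hh2def]; ring
    | m+1, 0 =>
      have hmax : max (m+1+0) 1 = m+1 := by omega
      simp only [hg1def, hh1def, hg2def, hh2def]
      simp [hmax, mul_pow, Nat.succ_ne_zero]
      ring
    | 0, n+1 =>
      have hmax : max (0+(n+1)) 1 = n+1 := by omega
      simp only [hg1def, hh1def, hg2def, hh2def]
      simp [hmax, mul_pow, Nat.succ_ne_zero]
      ring
    | m+1, n+1 =>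
      simp [hg1def, hh1def, hg2def, hh2def, Nat.succ_ne_zero]
  have := H.tsum_eq
  calc (∑' p : ℕ × ℕ,
        (Real.exp (-b) * b ^ p.1 / p.1.factorial) *
          (Real.exp (-a) * a ^ p.2 / p.2.factorial) *
          (if p.1 = 0 ∨ p.2 = 0 then (2:ℝ) ^ (max (p.1 + p.2) 1) else 0))
      = ∑' p : ℕ × ℕ, (g1 p.1 * h1 p.2 + g2 p.1 * h2 p.2) := by
        exact tsum_congr key
    _ = (Real.exp (-b) * Real.exp (2*b) + Real.exp (-b)) * Real.exp (-a) +
        Real.exp (-b) * (Real.exp (-a) * Real.exp (2*a) - Real.exp (-a)) := this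
    _ = Real.exp (lam * (β - 2 * t)) + Real.exp (-(lam * (β - 2 * t))) := by
        have h1' : lam * (β - 2 * t) = a - b := by rw [ha, hb]; ring
        rw [h1', neg_sub, Real.exp_sub, Real.exp_sub,
          show (2:ℝ)*b = b + b by ring, show (2:ℝ)*a = a + a by ring,
          Real.exp_add, Real.exp_add, Real.exp_neg, Real.exp_neg]
        field_simp
        ring
end

section
/- Let β > 0 and suppose v > 1 and s₄ > 0. The equation m = v·m − (s₄/(6β))·m³ + R(m), where R(m) = o(m³) as m → 0⁺, has, for v close to 1 from above, a positive solution m*(v) satisfying m*(v) = sqrt(6β(v−1)/s₄)·(1 + o(1)) as v ↓ 1. -/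
open Asymptotics Filter

/-- critical exponent: for β > 0, s₄ > 0 and a continuous remainder
R(m) = o(m³) as m → 0⁺, the mean-field equation m = v·m − (s₄/(6β))m³ + R(m) has,
for v close to 1 from above, a positive solution m*(v) with
m*(v) = sqrt(6β(v−1)/s₄)·(1 + o(1)) as v ↓ 1. -/
theorem stmt15 (β s₄ : ℝ) (hβ : 0 < β) (hs : 0 < s₄) (R : ℝ → ℝ)
    (hRcont : Continuous R)
    (hR : R =o[nhdsWithin 0 (Set.Ioi 0)] fun m : ℝ => m ^ 3) :
    ∃ ms : ℝ → ℝ,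
      (∀ᶠ v in nhdsWithin 1 (Set.Ioi 1),
        0 < ms v ∧ ms v = v * ms v - s₄ / (6 * β) * (ms v) ^ 3 + R (ms v)) ∧
      Tendsto (fun v => ms v / Real.sqrt (6 * β * (v - 1) / s₄))
        (nhdsWithin 1 (Set.Ioi 1)) (nhds 1) := by
  classical
  have h6β : (0:ℝ) < 6 * β := by linarith
  set c : ℝ := s₄ / (6 * β) with hc_def
  have hc : 0 < c := div_pos hs h6β
  set F : ℝ → ℝ → ℝ := fun v m => (v - 1) * m - c * m ^ 3 + R m with hF
  set m₀ : ℝ → ℝ := fun v => Real.sqrt (6 * β * (v - 1) / s₄) with hm₀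
  -- basic facts about m₀
  have hm₀sq : ∀ v : ℝ, 1 ≤ v → c * (m₀ v) ^ 2 = v - 1 := by
    intro v hv
    have h1 : (0:ℝ) ≤ 6 * β * (v - 1) / s₄ :=
      div_nonneg (mul_nonneg h6β.le (by linarith)) hs.le
    have := Real.sq_sqrt h1
    simp only [hm₀]
    rw [this]
    field_simp [hc_def]
    linear_combination (v - 1) * (div_mul_cancel₀ s₄ h6β.ne') + 6 * β * (v - 1) * hc_def
  have hm₀pos : ∀ v : ℝ, 1 < v → 0 < m₀ v := by
    intro v hv
    apply Real.sqrt_pos.2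
    have hv1 : (0:ℝ) < v - 1 := by linarith
    exact div_pos (mul_pos h6β hv1) hs
  -- extract a bound on R for small positive m, with constant δ > 0
  have hRbound : ∀ δ : ℝ, 0 < δ → ∃ η > 0, ∀ m : ℝ, 0 < m → m < η → |R m| ≤ δ * m ^ 3 := by
    intro δ hδ
    have h := hR.def hδ
    rw [Filter.Eventually, Metric.mem_nhdsWithin_iff] at h
    obtain ⟨η, hη, hsub⟩ := h
    refine ⟨η, hη, fun m hm hmη => ?_⟩
    have hmem : m ∈ Metric.ball (0:ℝ) η ∩ Set.Ioi 0 := by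
      constructor
      · simp [Real.dist_eq, abs_of_pos hm, hmη]
      · exact hm
    have := hsub hmem
    simp only [Set.mem_setOf_eq, Real.norm_eq_abs] at this
    calc |R m| ≤ δ * |m ^ 3| := this
      _ = δ * m ^ 3 := by rw [abs_of_pos (by positivity)]
  -- m₀ tends to 0 along nhdsWithin 1 (Ioi 1)
  have hm₀tend : Tendsto m₀ (nhdsWithin 1 (Set.Ioi 1)) (nhds 0) := by
    have hcont : Continuous m₀ := by
      simp only [hm₀]; fun_prop
    have : Tendsto m₀ (nhds 1) (nhds (m₀ 1)) := hcont.tendsto 1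
    have h0 : m₀ 1 = 0 := by simp [hm₀]
    rw [h0] at this
    exact this.mono_left nhdsWithin_le_nhds
  -- define ms by choice of a root in [m₀/2, 2 m₀]
  set ms : ℝ → ℝ := fun v =>
    if h : ∃ m ∈ Set.Icc (m₀ v / 2) (2 * m₀ v), F v m = 0 then h.choose else 1 with hms
  have hkey : ∀ᶠ v in nhdsWithin 1 (Set.Ioi 1),
      1 < v ∧ ms v ∈ Set.Icc (m₀ v / 2) (2 * m₀ v) ∧ F v (ms v) = 0 := by
    obtain ⟨η, hη, hRb⟩ := hRbound (c / 2) (half_pos hc)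
    have hev : ∀ᶠ v in nhdsWithin 1 (Set.Ioi 1), m₀ v < η / 2 ∧ 1 < v := by
      filter_upwards [hm₀tend.eventually (eventually_lt_nhds (show (0:ℝ) < η/2 by positivity)),
        self_mem_nhdsWithin] with v h1 h2
      exact ⟨h1, h2⟩
    filter_upwards [hev] with v hv
    obtain ⟨hvη, hv1⟩ := hv
    have hm0 := hm₀pos v hv1
    have hceq := hm₀sq v hv1.le
    -- F v (m₀ v / 2) > 0
    have hFa : 0 < F v (m₀ v / 2) := by
      have hb := hRb (m₀ v / 2) (by positivity) (by linarith)
      have habs : -(c/2 * (m₀ v / 2)^3) ≤ R (m₀ v / 2) := by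
        have := abs_le.1 hb
        linarith [this.1]
      simp only [hF]
      nlinarith [hm0, hc]
    -- F v (2 * m₀ v) < 0
    have hFb : F v (2 * m₀ v) < 0 := by
      have hb := hRb (2 * m₀ v) (by positivity) (by linarith)
      have habs : R (2 * m₀ v) ≤ c/2 * (2 * m₀ v)^3 := (abs_le.1 hb).2
      simp only [hF]
      nlinarith [hm0, hc]
    -- IVT
    have hab : m₀ v / 2 ≤ 2 * m₀ v := by linarith
    have hcontF : ContinuousOn (F v) (Set.Icc (m₀ v / 2) (2 * m₀ v)) := by
      apply Continuous.continuousOn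
      simp only [hF]
      fun_prop
    have h0mem : (0:ℝ) ∈ Set.Icc (F v (2 * m₀ v)) (F v (m₀ v / 2)) :=
      ⟨hFb.le, hFa.le⟩
    obtain ⟨m, hmI, hmeq⟩ := intermediate_value_Icc' hab hcontF h0mem
    have hex : ∃ m ∈ Set.Icc (m₀ v / 2) (2 * m₀ v), F v m = 0 := ⟨m, hmI, hmeq⟩
    have hmsv : ms v = hex.choose := by simp only [hms, dif_pos hex]
    obtain ⟨hI, hEq⟩ := hex.choose_spec
    rw [hmsv]
    exact ⟨hv1, hI, hEq⟩
  refine ⟨ms, ?_, ?_⟩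
  · filter_upwards [hkey] with v hv
    obtain ⟨hv1, hI, hEq⟩ := hv
    have hm0 := hm₀pos v hv1
    constructor
    · have := hI.1; linarith
    · simp only [hF] at hEq
      linear_combination -hEq
  -- second, the tendsto statement
  · rw [Metric.tendsto_nhds]
    intro ε hε
    obtain ⟨η', hη', hRb'⟩ := hRbound (c * ε / 8) (by positivity)
    filter_upwards [hkey, hm₀tend.eventually
      (eventually_lt_nhds (show (0:ℝ) < η'/2 by positivity))] with v hv hvη
    obtain ⟨hv1, hI, hEq⟩ := hv
    set m := ms v with hmdef
    have hm0 := hm₀pos v hv1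
    have hceq := hm₀sq v hv1.le
    have hmpos : 0 < m := lt_of_lt_of_le (by linarith) hI.1
    have hmlt : m < η' := lt_of_le_of_lt hI.2 (by linarith)
    have hRm := hRb' m hmpos hmlt
    -- from the root equation: c * m * (m² − m₀²) = R m
    have heq2 : c * m * (m ^ 2 - m₀ v ^ 2) = R m := by
      simp only [hF] at hEq
      linear_combination -hEq - m * hceq
    have habs : c * m * |m ^ 2 - m₀ v ^ 2| ≤ c * ε / 8 * m ^ 3 := by
      calc c * m * |m ^ 2 - m₀ v ^ 2| = |c * m * (m ^ 2 - m₀ v ^ 2)| := by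
            rw [abs_mul, abs_of_pos (by positivity : (0:ℝ) < c * m)]
        _ = |R m| := by rw [heq2]
        _ ≤ c * ε / 8 * m ^ 3 := hRm
    have hm2 : m ^ 2 ≤ 4 * m₀ v ^ 2 := by nlinarith [hI.2]
    have hbd : |m ^ 2 - m₀ v ^ 2| ≤ ε / 2 * m₀ v ^ 2 := by
      have h1 : c * m * |m ^ 2 - m₀ v ^ 2| ≤ c * m * (ε / 2 * m₀ v ^ 2) := by
        calc c * m * |m ^ 2 - m₀ v ^ 2| ≤ c * ε / 8 * m ^ 3 := habs
          _ ≤ c * m * (ε / 2 * m₀ v ^ 2) := by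
              nlinarith [mul_le_mul_of_nonneg_left hm2
                (by positivity : (0:ℝ) ≤ c * ε / 8 * m)]
      exact le_of_mul_le_mul_left h1 (by positivity)
    have hdiff : |m - m₀ v| ≤ ε / 2 * m₀ v := by
      have h1 : |m - m₀ v| * (m + m₀ v) = |m ^ 2 - m₀ v ^ 2| := by
        rw [← abs_of_pos (show (0:ℝ) < m + m₀ v by linarith), ← abs_mul]
        ring_nf
      nlinarith [abs_nonneg (m - m₀ v)]
    rw [Real.dist_eq]
    have h2 : m / m₀ v - 1 = (m - m₀ v) / m₀ v := by field_simp
    rw [h2, abs_div, abs_of_pos hm0, div_lt_iff₀ hm0]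
    calc |m - m₀ v| ≤ ε / 2 * m₀ v := hdiff
      _ < ε * m₀ v := by linarith [mul_pos hε hm0]
end

section
/- Let β > 0, η > 0, and let U : ℝ → ℝ be even, convex, with U(z) ≥ −2η for all z, and U(z) ≥ |z|·(log|z| − C₀) for some constant C₀ and all |z| ≥ 1. Let m : S_β → ℝ be absolutely continuous with m(0) = m* + 2δ and r = min{t > 0 : m(t) = m* + δ} for some δ ∈ (0,1), m* ≥ 0. Then max{ ∫₀^r (m(t) − m*)² dt , ∫₀^r U(m'(t)) dt − 2ηβ } ≥ e^{−c/δ} for some constant c = c(η, β, C₀) < ∞ and all δ small enough. -/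
open MeasureTheory

/-- Key elementary inequality: `exp (-(1/(2δ))) ≤ δ` for `δ > 0`. -/
lemma exp_neg_half_inv_le {δ : ℝ} (hδ : 0 < δ) : Real.exp (-(1 / (2 * δ))) ≤ δ := by
  rw [← Real.le_log_iff_exp_le hδ]
  have hx : (0:ℝ) < δ⁻¹ := by positivity
  have hy : Real.sqrt δ⁻¹ ^ 2 = δ⁻¹ := Real.sq_sqrt hx.le
  have hy0 : 0 < Real.sqrt δ⁻¹ := Real.sqrt_pos.mpr hx
  have hlog : Real.log δ⁻¹ = 2 * Real.log (Real.sqrt δ⁻¹) := by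
    rw [Real.log_sqrt hx.le]; ring
  have h1 : Real.log (Real.sqrt δ⁻¹) ≤ Real.sqrt δ⁻¹ - 1 :=
    Real.log_le_sub_one_of_pos hy0
  have h2 : Real.log δ = -Real.log δ⁻¹ := by rw [Real.log_inv]; ring
  have h3 : 1 / (2 * δ) = δ⁻¹ / 2 := by rw [one_div, mul_inv]; ring
  rw [h2, h3]
  nlinarith [sq_nonneg (Real.sqrt δ⁻¹ - 2), hy, hlog, h1]

/-- sup-norm stability estimate: let U be even, convex, bounded below
by −2η and with U(z) ≥ |z|(log|z| − C₀) for |z| ≥ 1.  There are a constant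
c = c(η,β,C₀) and δ₀ > 0 such that for all δ ∈ (0,δ₀) and every absolutely continuous
trajectory m (with derivative m') on the circle with m(0) = m* + 2δ, first hitting
time r of the level m* + δ, one has
max{ ∫₀^r (m−m*)², ∫₀^r U(m') − 2ηβ } ≥ e^{−c/δ}. -/
theorem stmt16 (β η C₀ : ℝ) (hβ : 0 < β) (hη : 0 < η) (U : ℝ → ℝ)
    (hUeven : ∀ z, U (-z) = U z) (hUconv : ConvexOn ℝ Set.univ U)
    (hUlb : ∀ z, -2 * η ≤ U z)
    (hUgrowth : ∀ z : ℝ, 1 ≤ |z| → |z| * (Real.log |z| - C₀) ≤ U z) :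
    ∃ c : ℝ, ∃ δ₀ > (0:ℝ), ∀ δ mstar r : ℝ, ∀ m m' : ℝ → ℝ,
      0 < δ → δ < δ₀ → 0 ≤ mstar → 0 < r → r ≤ β →
      IntervalIntegrable m' volume 0 β →
      (∀ s ∈ Set.Icc (0:ℝ) β, ∀ t ∈ Set.Icc (0:ℝ) β,
        m t - m s = ∫ u in s..t, m' u) →
      IntervalIntegrable (fun t => U (m' t)) volume 0 r →
      m 0 = mstar + 2 * δ → m r = mstar + δ →
      (∀ t ∈ Set.Ico (0:ℝ) r, mstar + δ < m t) →
      Real.exp (-c / δ) ≤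
        max (∫ t in (0:ℝ)..r, (m t - mstar) ^ 2)
          ((∫ t in (0:ℝ)..r, U (m' t)) - 2 * η * β) := by
  obtain ⟨c₁, hc₁def⟩ : ∃ x : ℝ, x = 2 * η * β + 3 + |C₀| := ⟨_, rfl⟩
  have hc₁1 : 1 ≤ c₁ := by rw [hc₁def]; nlinarith [abs_nonneg C₀, mul_pos hη hβ]
  refine ⟨c₁ + 1, 1, one_pos, ?_⟩
  intro δ mstar r m m' hδ hδ1 hmstar hr hrβ hm'int hftc hUint hm0 hmr habove
  have hβ0 : (0:ℝ) ≤ β := hβ.le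
  have hexp1 : Real.exp (-(1 / δ)) ≤ δ ^ 2 := by
    have h : Real.exp (-(1 / δ)) = Real.exp (-(1 / (2 * δ))) ^ 2 := by
      rw [← Real.exp_nat_mul]; ring_nf
    rw [h]
    exact pow_le_pow_left₀ (Real.exp_pos _).le (exp_neg_half_inv_le hδ) 2
  have hδ2le : δ ^ 2 ≤ δ := by nlinarith
  have hee : Real.exp (-c₁ / δ) ≤ Real.exp (-(1 / δ)) := by
    apply Real.exp_le_exp.mpr
    rw [neg_div, neg_le_neg_iff]
    gcongr
  have hexpc₁ : Real.exp (-c₁ / δ) ≤ δ := by linarith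
  by_cases hcase : Real.exp (-c₁ / δ) ≤ r
  · -- large r : use the left term
    refine le_trans ?_ (le_max_left _ _)
    have hmcont : ContinuousOn m (Set.Icc 0 β) := by
      have h1 : ContinuousOn (fun t => m 0 + ∫ u in (0:ℝ)..t, m' u) (Set.Icc 0 β) := by
        apply ContinuousOn.add continuousOn_const
        have := intervalIntegral.continuousOn_primitive_interval
          (μ := volume) (a := 0) (b := β) (f := m')
          (by rwa [Set.uIcc_of_le hβ0,
            ← intervalIntegrable_iff_integrableOn_Icc_of_le hβ0])
        simpa [Set.uIcc_of_le hβ0] using this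
      apply h1.congr
      intro t ht
      have h2 := hftc 0 ⟨le_refl 0, hβ0⟩ t ht
      show m t = m 0 + ∫ u in (0:ℝ)..t, m' u
      linarith
    have hsub : Set.Icc (0:ℝ) r ⊆ Set.Icc 0 β := Set.Icc_subset_Icc le_rfl hrβ
    have hint2 : IntervalIntegrable (fun t => (m t - mstar) ^ 2) volume 0 r := by
      apply ContinuousOn.intervalIntegrable
      rw [Set.uIcc_of_le hr.le]
      exact ((hmcont.mono hsub).sub continuousOn_const).pow 2
    have hpt : ∀ t ∈ Set.Icc (0:ℝ) r, δ ^ 2 ≤ (m t - mstar) ^ 2 := by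
      intro t ht
      rcases eq_or_lt_of_le ht.2 with h | h
      · subst h; rw [hmr]; ring_nf; exact le_rfl
      · have h1 := habove t ⟨ht.1, h⟩
        have h2 : δ ≤ m t - mstar := by linarith
        exact pow_le_pow_left₀ hδ.le h2 2
    have hlow : r * δ ^ 2 ≤ ∫ t in (0:ℝ)..r, (m t - mstar) ^ 2 := by
      have := intervalIntegral.integral_mono_on hr.le
        (intervalIntegrable_const (c := δ ^ 2)) hint2 hpt
      simpa using this
    refine le_trans ?_ hlow
    have hsplit : Real.exp (-(c₁ + 1) / δ) = Real.exp (-c₁ / δ) * Real.exp (-(1 / δ)) := by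
      rw [← Real.exp_add]; ring_nf
    rw [hsplit]
    have := mul_le_mul hcase hexp1 (Real.exp_pos _).le hr.le
    linarith
  · -- small r : Jensen on the right term
    push_neg at hcase
    refine le_trans ?_ (le_max_right _ _)
    have hrδ : r < δ := lt_of_lt_of_le hcase hexpc₁
    set μ := volume.restrict (Set.Ioc (0:ℝ) r) with hμdef
    have hμuniv : μ Set.univ = ENNReal.ofReal r := by
      rw [hμdef, Measure.restrict_apply_univ, Real.volume_Ioc, sub_zero]
    haveI : IsFiniteMeasure μ := ⟨by rw [hμuniv]; exact ENNReal.ofReal_lt_top⟩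
    haveI : NeZero μ := ⟨by
      intro h
      rw [h] at hμuniv
      simp at hμuniv
      linarith⟩
    have hm'i : Integrable m' μ := by
      have h1 : IntegrableOn m' (Set.Ioc 0 β) volume := by
        rwa [intervalIntegrable_iff_integrableOn_Ioc_of_le hβ0] at hm'int
      exact h1.mono_set (Set.Ioc_subset_Ioc le_rfl hrβ)
    have hUi : Integrable (U ∘ m') μ := by
      have h1 : IntegrableOn (fun t => U (m' t)) (Set.Ioc 0 r) volume := by
        rwa [intervalIntegrable_iff_integrableOn_Ioc_of_le hr.le] at hUint
      exact h1
    have hjensen := hUconv.map_average_le (hUconv.continuousOn isOpen_univ)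
      isClosed_univ (Filter.Eventually.of_forall fun _ => Set.mem_univ _) hm'i hUi
    have hrtoReal : (μ Set.univ).toReal = r := by
      rw [hμuniv, ENNReal.toReal_ofReal hr.le]
    have hintm' : ∫ x, m' x ∂μ = -δ := by
      have h1 : ∫ x, m' x ∂μ = ∫ u in (0:ℝ)..r, m' u := by
        rw [intervalIntegral.integral_of_le hr.le]
      have h2 := hftc 0 ⟨le_refl 0, hβ0⟩ r ⟨hr.le, hrβ⟩
      rw [h1, ← h2, hmr, hm0]; ring
    have havgm' : ⨍ x, m' x ∂μ = -(δ / r) := by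
      rw [average_eq, measureReal_def, hrtoReal, hintm', smul_eq_mul, div_eq_mul_inv]; ring
    have havgU : ⨍ x, U (m' x) ∂μ = r⁻¹ * ∫ t in (0:ℝ)..r, U (m' t) := by
      rw [average_eq, measureReal_def, hrtoReal, smul_eq_mul, intervalIntegral.integral_of_le hr.le]
    rw [havgm', havgU, hUeven] at hjensen
    have hδr1 : 1 ≤ δ / r := (one_le_div hr).mpr hrδ.le
    have habs : |δ / r| = δ / r := abs_of_pos (by linarith)
    have hgrow := hUgrowth (δ / r) (by rw [habs]; exact hδr1)
    rw [habs] at hgrow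
    have hlogr : Real.log r < -c₁ / δ := by
      calc Real.log r < Real.log (Real.exp (-c₁ / δ)) := Real.log_lt_log hr hcase
        _ = -c₁ / δ := Real.log_exp _
    have hlogδr : Real.log (δ / r) = Real.log δ - Real.log r :=
      Real.log_div (by linarith) (by linarith)
    have hδlogδ : -(1 / 2 : ℝ) ≤ δ * Real.log δ := by
      have h1 : -(1 / (2 * δ)) ≤ Real.log δ :=
        (Real.le_log_iff_exp_le hδ).mpr (exp_neg_half_inv_le hδ)
      have h2 : δ * -(1 / (2 * δ)) ≤ δ * Real.log δ :=
        mul_le_mul_of_nonneg_left h1 hδ.le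
      have h3 : δ * -(1 / (2 * δ)) = -(1 / 2 : ℝ) := by field_simp
      linarith
    have hC₀ : δ * C₀ ≤ |C₀| := by
      calc δ * C₀ ≤ δ * |C₀| := mul_le_mul_of_nonneg_left (le_abs_self _) hδ.le
        _ ≤ 1 * |C₀| := mul_le_mul_of_nonneg_right hδ1.le (abs_nonneg _)
        _ = |C₀| := one_mul _
    have hI : 2 * η * β + 2 ≤ ∫ t in (0:ℝ)..r, U (m' t) := by
      have h1 : δ / r * (Real.log (δ / r) - C₀) ≤ r⁻¹ * ∫ t in (0:ℝ)..r, U (m' t) :=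
        le_trans hgrow hjensen
      have h2 := mul_le_mul_of_nonneg_left h1 hr.le
      have h3 : r * (r⁻¹ * ∫ t in (0:ℝ)..r, U (m' t)) = ∫ t in (0:ℝ)..r, U (m' t) := by
        rw [← mul_assoc, mul_inv_cancel₀ hr.ne', one_mul]
      have h4 : r * (δ / r * (Real.log (δ / r) - C₀)) =
          δ * Real.log δ - δ * Real.log r - δ * C₀ := by
        rw [hlogδr]; field_simp
      rw [h3, h4] at h2
      have h6 : c₁ ≤ -(δ * Real.log r) := by
        have h7 := mul_le_mul_of_nonneg_left hlogr.le hδ.le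
        have h8 : δ * (-c₁ / δ) = -c₁ := by field_simp
        linarith
      rw [hc₁def] at h6
      linarith
    have hexpone : Real.exp (-(c₁ + 1) / δ) ≤ 1 := by
      have h9 : Real.exp (-(c₁ + 1) / δ) ≤ Real.exp 0 := by
        apply Real.exp_le_exp.mpr
        rw [neg_div]
        have : 0 ≤ (c₁ + 1) / δ := div_nonneg (by linarith) hδ.le
        linarith
      simpa [Real.exp_zero] using h9
    linarith
end
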